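/- arXiv:2512.23891 — 5 statements merged into one kernel-verified Lean document; each statement's English description precedes it below -/
import Mathlib

section
/- Let m and M be positive integers with M/2 < m < M, and let Y be a subset of the open integer interval (m, M). Then the submonoid generated by Y ∪ {m, M} is a numerical semigroup with multiplicity m and maximum primitive M if and only if gcd(Y ∪ {m, M}) = 1. -/
/-- A numerical semigroup: a cofinite additive submonoid of ℕ, viewed as a set. -/
noncomputable def IsNumericalSemigroup (S : Set ℕ) : Prop :=
  0 ∈ S ∧ (∀ a ∈ S, ∀ b ∈ S, a + b ∈ S) ∧ (Sᶜ : Set ℕ).Finite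

/-- The primitives (minimal generators): nonzero elements not a sum of two nonzero elements. -/
noncomputable def Primitives (S : Set ℕ) : Set ℕ :=
  {s | s ∈ S ∧ s ≠ 0 ∧ ∀ a ∈ S, ∀ b ∈ S, a ≠ 0 → b ≠ 0 → a + b ≠ s}

/-- The maximum primitive. -/
noncomputable def MaxPrim (S : Set ℕ) : ℕ := sSup (Primitives S)

/-- The multiplicity: the smallest nonzero element. -/
noncomputable def Multiplicity (S : Set ℕ) : ℕ := sInf {s | s ∈ S ∧ s ≠ 0}

/-- The Frobenius number: the largest natural number not in S. -/
noncomputable def Frobenius (S : Set ℕ) : ℕ := sSup (Sᶜ : Set ℕ)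

noncomputable def Conductor (S : Set ℕ) : ℕ := Frobenius S + 1

/-- The genus: number of positive integers not in S. -/
noncomputable def Genus (S : Set ℕ) : ℕ := ((Sᶜ : Set ℕ) \ {0}).ncard

/-- Depth: ⌈c/m⌉ -/
noncomputable def Depth (S : Set ℕ) : ℕ := (Conductor S + Multiplicity S - 1) / Multiplicity S

/-- Primitive depth: ⌈maxprim/m⌉ -/
noncomputable def PrimDepth (S : Set ℕ) : ℕ := (MaxPrim S + Multiplicity S - 1) / Multiplicity S

/-- Submonoid of ℕ generated by a set, as a set. -/
noncomputable def GeneratedBy (Y : Set ℕ) : Set ℕ := (AddSubmonoid.closure Y : AddSubmonoid ℕ)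

/-- Left elements: elements of S below the Frobenius number. -/
noncomputable def Lefts (S : Set ℕ) : Set ℕ := {s | s ∈ S ∧ s < Frobenius S}

noncomputable def Lefts' (S : Set ℕ) : Set ℕ := Lefts S ∪ {Frobenius S}

/-- Embedding dimension. -/
noncomputable def EmbDim (S : Set ℕ) : ℕ := (Primitives S).ncard

/-- gcd of a set of naturals: the greatest common divisor of all elements. -/
noncomputable def SetGcd (Y : Set ℕ) : ℕ := sSup {d : ℕ | ∀ y ∈ Y, d ∣ y}

/-- The map Ψ of the paper: S ↦ ⟨L'(S)/gcd(L'(S))⟩. -/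
noncomputable def Psi (S : Set ℕ) : Set ℕ :=
  GeneratedBy ((fun a => a / SetGcd (Lefts' S)) '' Lefts' S)

-- every nonzero element of closure is ≥ lower bound of generators
lemma low_bound {G : Set ℕ} {m : ℕ} (hG : ∀ g ∈ G, m ≤ g) :
    ∀ s ∈ AddSubmonoid.closure G, s = 0 ∨ m ≤ s := by
  intro s hs
  induction hs using AddSubmonoid.closure_induction with
  | mem x hx => exact Or.inr (hG x hx)
  | zero => exact Or.inl rfl
  | add x y hx hy ihx ihy =>
    rcases ihx with h | h
    · simpa [h] using ihy
    · omega

lemma decomp {G : Set ℕ} :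
    ∀ s ∈ AddSubmonoid.closure G, s = 0 ∨ ∃ g ∈ G, ∃ t ∈ AddSubmonoid.closure G, s = g + t := by
  intro s hs
  induction hs using AddSubmonoid.closure_induction with
  | mem x hx => exact Or.inr ⟨x, hx, 0, zero_mem _, by omega⟩
  | zero => exact Or.inl rfl
  | add x y hx hy ihx ihy =>
    rcases ihx with h | ⟨g, hg, t, ht, rfl⟩
    · subst h
      rcases ihy with h | ⟨g, hg, t, ht, rfl⟩
      · exact Or.inl (by omega)
      · exact Or.inr ⟨g, hg, t, ht, by omega⟩
    · exact Or.inr ⟨g, hg, t + y, add_mem ht hy, by omega⟩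

lemma dvd_all {G : Set ℕ} {d : ℕ} (hd : ∀ g ∈ G, d ∣ g) :
    ∀ s ∈ AddSubmonoid.closure G, d ∣ s := by
  intro s hs
  induction hs using AddSubmonoid.closure_induction with
  | mem x hx => exact hd x hx
  | zero => exact dvd_zero d
  | add x y hx hy ihx ihy => exact dvd_add ihx ihy

lemma exists_adj {G : Set ℕ} (hgcd : ∀ k : ℕ, (∀ g ∈ G, k ∣ g) → k = 1) :
    ∃ a : ℕ, a ∈ AddSubmonoid.closure G ∧ a + 1 ∈ AddSubmonoid.closure G := by
  set Gz : Set ℤ := (Nat.cast : ℕ → ℤ) '' G with hGz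
  obtain ⟨k, hk⟩ := Int.subgroup_cyclic (AddSubgroup.closure Gz)
  have hdvd : ∀ g ∈ G, k.natAbs ∣ g := by
    intro g hg
    have h1 : (g : ℤ) ∈ AddSubgroup.closure Gz := AddSubgroup.subset_closure ⟨g, hg, rfl⟩
    rw [hk, AddSubgroup.mem_closure_singleton] at h1
    obtain ⟨n, hn⟩ := h1
    have : k ∣ (g : ℤ) := ⟨n, by simpa [smul_eq_mul, mul_comm] using hn.symm⟩
    exact Int.natAbs_dvd_natAbs.mpr (by simpa using this)
  have hk1 : k.natAbs = 1 := hgcd _ hdvd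
  have hone : (1 : ℤ) ∈ AddSubgroup.closure Gz := by
    rw [hk, AddSubgroup.mem_closure_singleton]
    rcases Int.natAbs_eq_iff.mp hk1 with h | h
    · exact ⟨1, by simp [h]⟩
    · exact ⟨-1, by simp [h]⟩
  have key : ∀ z ∈ AddSubgroup.closure Gz,
      ∃ x y : ℕ, x ∈ AddSubmonoid.closure G ∧ y ∈ AddSubmonoid.closure G ∧ (x : ℤ) - y = z := by
    intro z hz
    induction hz using AddSubgroup.closure_induction with
    | mem x hx =>
      obtain ⟨g, hg, rfl⟩ := hx
      exact ⟨g, 0, AddSubmonoid.subset_closure hg, zero_mem _, by simp⟩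
    | zero => exact ⟨0, 0, zero_mem _, zero_mem _, by simp⟩
    | add x y hx hy ihx ihy =>
      obtain ⟨a, b, ha, hb, hab⟩ := ihx
      obtain ⟨c, d, hc, hd, hcd⟩ := ihy
      exact ⟨a + c, b + d, add_mem ha hc, add_mem hb hd, by push_cast; omega⟩
    | neg x hx ihx =>
      obtain ⟨a, b, ha, hb, hab⟩ := ihx
      exact ⟨b, a, hb, ha, by omega⟩
  obtain ⟨x, y, hx, hy, hxy⟩ := key 1 hone
  have : x = y + 1 := by omega
  exact ⟨y, hy, by rw [← this]; exact hx⟩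

lemma cofin {G : Set ℕ} {a : ℕ} (ha : a ∈ AddSubmonoid.closure G)
    (ha1 : a + 1 ∈ AddSubmonoid.closure G) :
    ((AddSubmonoid.closure G : Set ℕ)ᶜ).Finite := by
  have hmem : ∀ n, a * a ≤ n → n ∈ AddSubmonoid.closure G := by
    intro n hn
    rcases Nat.eq_zero_or_pos a with rfl | hapos
    · have : n = n • (0 + 1) := by simp
      rw [this]; exact AddSubmonoid.nsmul_mem _ ha1 n
    · set q := n / a with hq
      set r := n % a with hr
      have hmod : a * q + r = n := Nat.div_add_mod n a
      have hrlt : r < a := Nat.mod_lt _ hapos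
      have hqa : a ≤ q := by
        rw [hq, Nat.le_div_iff_mul_le hapos]; nlinarith
      obtain ⟨c, hc⟩ := Nat.exists_eq_add_of_le (le_of_lt (lt_of_lt_of_le hrlt hqa))
      have hneq : n = r • (a + 1) + c • a := by
        simp only [smul_eq_mul]; nlinarith
      rw [hneq]
      exact add_mem (AddSubmonoid.nsmul_mem _ ha1 r) (AddSubmonoid.nsmul_mem _ ha c)
  apply Set.Finite.subset (Set.finite_Iio (a * a))
  intro x hx
  simp only [Set.mem_compl_iff, SetLike.mem_coe] at hx
  by_contra h
  exact hx (hmem x (by simpa using h))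

/-- for M/2 < m < M and Y ⊆ (m,M), ⟨Y ∪ {m,M}⟩ is a numerical semigroup with
multiplicity m and maximum primitive M iff gcd(Y ∪ {m,M}) = 1. -/
theorem stmt2 (m M : ℕ) (hm : 0 < m) (hmM : m < M) (h2 : M < 2 * m)
    (Y : Set ℕ) (hY : Y ⊆ Set.Ioo m M) :
    (IsNumericalSemigroup (GeneratedBy (Y ∪ {m, M})) ∧
      Multiplicity (GeneratedBy (Y ∪ {m, M})) = m ∧
      MaxPrim (GeneratedBy (Y ∪ {m, M})) = M) ↔
    SetGcd (Y ∪ {m, M}) = 1 := by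
  set G : Set ℕ := Y ∪ {m, M} with hG
  have hmG : m ∈ G := by simp [hG]
  have hMG : M ∈ G := by simp [hG]
  have hGlow : ∀ g ∈ G, m ≤ g := by
    intro g hg
    rcases hg with hg | hg
    · exact le_of_lt (hY hg).1
    · simp only [Set.mem_insert_iff, Set.mem_singleton_iff] at hg
      omega
  have hGhigh : ∀ g ∈ G, g ≤ M := by
    intro g hg
    rcases hg with hg | hg
    · exact le_of_lt (hY hg).2
    · simp only [Set.mem_insert_iff, Set.mem_singleton_iff] at hg
      omega
  have hmemGen : ∀ x, x ∈ GeneratedBy G ↔ x ∈ AddSubmonoid.closure G := fun x => Iff.rfl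
  -- the set of common divisors
  set D : Set ℕ := {d : ℕ | ∀ y ∈ G, d ∣ y} with hD
  have hone : (1 : ℕ) ∈ D := fun y _ => one_dvd y
  have hbdd : BddAbove D := ⟨m, fun k hk => Nat.le_of_dvd hm (hk m hmG)⟩
  have hgcd_eq : SetGcd G = sSup D := rfl
  constructor
  · rintro ⟨⟨-, -, hfin⟩, -, -⟩
    have hmemD : sSup D ∈ D := Nat.sSup_mem ⟨1, hone⟩ hbdd
    have hge1 : 1 ≤ sSup D := le_csSup hbdd hone
    by_contra hne
    have hge2 : 2 ≤ sSup D := by omega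
    set d := sSup D with hd
    have hdvdS : ∀ s ∈ AddSubmonoid.closure G, d ∣ s := dvd_all hmemD
    have hinf : ((GeneratedBy G)ᶜ : Set ℕ).Infinite := by
      apply Set.infinite_of_injective_forall_mem (f := fun n : ℕ => n * d + 1)
      · intro a b hab
        simp only at hab
        have : a * d = b * d := by omega
        exact Nat.eq_of_mul_eq_mul_right (by omega) this
      · intro n
        simp only [Set.mem_compl_iff]
        intro hmem
        have := hdvdS _ ((hmemGen _).mp hmem)
        have h1 : d ∣ 1 := (Nat.dvd_add_right ⟨n, mul_comm n d⟩).mp this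
        have := Nat.le_of_dvd Nat.one_pos h1
        omega
    exact hinf hfin
  · intro hgcd
    rw [hgcd_eq] at hgcd
    have hgcd' : ∀ k : ℕ, (∀ g ∈ G, k ∣ g) → k = 1 := by
      intro k hk
      have hle : k ≤ 1 := hgcd ▸ le_csSup hbdd hk
      have : k ∣ m := hk m hmG
      have : 1 ≤ k := by
        rcases Nat.eq_zero_or_pos k with rfl | h
        · omega
        · omega
      omega
    obtain ⟨a, ha, ha1⟩ := exists_adj hgcd'
    have hfin : ((GeneratedBy G)ᶜ : Set ℕ).Finite := cofin ha ha1
    have hmS : m ∈ AddSubmonoid.closure G := AddSubmonoid.subset_closure hmG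
    have hMS : M ∈ AddSubmonoid.closure G := AddSubmonoid.subset_closure hMG
    refine ⟨⟨zero_mem _, fun a ha b hb => add_mem ha hb, hfin⟩, ?_, ?_⟩
    · -- multiplicity
      have hmmem : m ∈ {s | s ∈ GeneratedBy G ∧ s ≠ 0} := ⟨hmS, by omega⟩
      unfold Multiplicity
      apply le_antisymm (Nat.sInf_le hmmem)
      apply le_csInf ⟨m, hmmem⟩
      rintro b ⟨hb, hb0⟩
      rcases low_bound hGlow b hb with rfl | h
      · omega
      · exact h
    · -- max primitive
      have hMprim : M ∈ Primitives (GeneratedBy G) := by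
        refine ⟨hMS, by omega, ?_⟩
        intro a ha b hb ha0 hb0 habs
        rcases low_bound hGlow a ha with rfl | hma
        · omega
        rcases low_bound hGlow b hb with rfl | hmb
        · omega
        omega
      have hub : ∀ s ∈ Primitives (GeneratedBy G), s ≤ M := by
        rintro s ⟨hs, hs0, hprim⟩
        by_contra hlt
        push_neg at hlt
        rcases decomp s hs with rfl | ⟨g, hg, t, ht, rfl⟩
        · omega
        have hgM := hGhigh g hg
        have hgm := hGlow g hg
        have ht0 : t ≠ 0 := by omega
        exact hprim g (AddSubmonoid.subset_closure hg) t ht (by omega) ht0 rfl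
      unfold MaxPrim
      exact le_antisymm (csSup_le ⟨M, hMprim⟩ hub) (le_csSup ⟨M, hub⟩ hMprim)
end

section
/- For every integer d > 0, the number of numerical semigroups with Frobenius number d and depth 2 equals 2^(⌊(d−1)/2⌋) − 1. -/
open Classical in
noncomputable def FF (d : ℕ) (X : Finset ℕ) : Set ℕ := insert 0 (↑X ∪ Set.Ici (d+1))

lemma mem_FF {d n : ℕ} {X : Finset ℕ} : n ∈ FF d X ↔ n = 0 ∨ n ∈ X ∨ d + 1 ≤ n := by
  simp [FF, Set.mem_insert_iff, Set.mem_Ici]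

lemma frobenius_FF {d : ℕ} (hd : 0 < d) {X : Finset ℕ}
    (hX : X ⊆ Finset.Ioo (d / 2) d) : Frobenius (FF d X) = d := by
  have hdn : d ∈ (FF d X)ᶜ := by
    intro h
    rcases mem_FF.mp h with h | h | h
    · omega
    · have := (Finset.mem_Ioo.mp (hX h)).2; omega
    · omega
  have hbdd : (FF d X)ᶜ ⊆ Set.Iic d := by
    intro n hn
    by_contra hgt
    exact hn (mem_FF.mpr (Or.inr (Or.inr (by simp [Set.mem_Iic] at hgt; omega))))
  apply le_antisymm
  · exact csSup_le ⟨d, hdn⟩ hbdd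
  · exact le_csSup ⟨d, fun n hn => hbdd hn⟩ hdn

lemma FF_mem_set {d : ℕ} (hd : 0 < d) {X : Finset ℕ}
    (hX : X ⊆ Finset.Ioo (d / 2) d) (hne : X.Nonempty) :
    IsNumericalSemigroup (FF d X) ∧ FF d X ≠ Set.univ ∧ Frobenius (FF d X) = d ∧
      Depth (FF d X) = 2 := by
  have hIoo : ∀ x ∈ X, d / 2 < x ∧ x < d := by
    intro x hx; have := hX hx; simpa [Finset.mem_Ioo] using this
  have hfrob := frobenius_FF hd hX
  -- multiplicity
  obtain ⟨x0, hx0⟩ := hne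
  have hx0' := hIoo x0 hx0
  have hMne : ({s | s ∈ FF d X ∧ s ≠ 0} : Set ℕ).Nonempty :=
    ⟨x0, mem_FF.mpr (Or.inr (Or.inl hx0)), by omega⟩
  have hmeq : Multiplicity (FF d X) = sInf {s | s ∈ FF d X ∧ s ≠ 0} := rfl
  have hm := Nat.sInf_mem hMne
  set m := sInf {s | s ∈ FF d X ∧ s ≠ 0} with hmdef
  have hmle : m ≤ x0 := Nat.sInf_le ⟨mem_FF.mpr (Or.inr (Or.inl hx0)), by omega⟩
  have hmX : m ∈ X := by
    rcases mem_FF.mp hm.1 with h | h | h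
    · exact absurd h hm.2
    · exact h
    · omega
  have hmIoo := hIoo m hmX
  have hm0 : 0 < m := by omega
  constructor
  · refine ⟨mem_FF.mpr (Or.inl rfl), ?_, ?_⟩
    · intro a ha b hb
      rcases mem_FF.mp ha with h | h | h
      · simpa [h] using hb
      · rcases mem_FF.mp hb with h' | h' | h'
        · simpa [h'] using ha
        · have h1 := hIoo a h; have h2 := hIoo b h'
          exact mem_FF.mpr (Or.inr (Or.inr (by omega)))
        · exact mem_FF.mpr (Or.inr (Or.inr (by omega)))
      · exact mem_FF.mpr (Or.inr (Or.inr (by omega)))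
    · apply Set.Finite.subset (Set.finite_Iic d)
      intro n hn
      by_contra hgt
      exact hn (mem_FF.mpr (Or.inr (Or.inr (by simp [Set.mem_Iic] at hgt; omega))))
  refine ⟨?_, hfrob, ?_⟩
  · intro h
    have : d ∈ FF d X := h ▸ Set.mem_univ d
    rcases mem_FF.mp this with h' | h' | h'
    · omega
    · have := hIoo d h'; omega
    · omega
  · show (Conductor (FF d X) + Multiplicity (FF d X) - 1) / Multiplicity (FF d X) = 2
    rw [hmeq, Conductor, hfrob]
    have h1 : d + 1 + m - 1 = d + m := by omega
    rw [h1, Nat.add_div_right d hm0]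
    have hdm : d / m = 1 := Nat.div_eq_of_lt_le (by omega) (by omega)
    omega

open Classical in
lemma set_eq_FF {d : ℕ} (hd : 0 < d) {S : Set ℕ}
    (hS : IsNumericalSemigroup S) (hne : S ≠ Set.univ) (hfrob : Frobenius S = d)
    (hdep : Depth S = 2) :
    ∃ X : Finset ℕ, X ⊆ Finset.Ioo (d / 2) d ∧ X.Nonempty ∧ S = FF d X := by
  obtain ⟨h0, hadd, hfin⟩ := hS
  have hcne : (Sᶜ : Set ℕ).Nonempty := Set.nonempty_compl.mpr hne
  have hbdd : BddAbove (Sᶜ : Set ℕ) := hfin.bddAbove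
  have hdS : d ∉ S := by
    have := Nat.sSup_mem hcne hbdd
    rwa [show sSup (Sᶜ : Set ℕ) = d from hfrob] at this
  have hbig : ∀ n, d < n → n ∈ S := by
    intro n hn
    by_contra hns
    have : n ≤ d := hfrob ▸ le_csSup hbdd hns
    omega
  -- multiplicity
  have hMne : ({s | s ∈ S ∧ s ≠ 0} : Set ℕ).Nonempty :=
    ⟨d + 1, hbig _ (by omega), by omega⟩
  have hmeq : Multiplicity S = sInf {s | s ∈ S ∧ s ≠ 0} := rfl
  have hm := Nat.sInf_mem hMne
  set m := sInf {s | s ∈ S ∧ s ≠ 0} with hmdef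
  have hm0 : 0 < m := Nat.pos_of_ne_zero hm.2
  have hdm : d / m = 1 := by
    have h1 : (Conductor S + Multiplicity S - 1) / Multiplicity S = 2 := hdep
    rw [hmeq, Conductor, hfrob] at h1
    have h2 : d + 1 + m - 1 = d + m := by omega
    rw [h2, Nat.add_div_right d hm0] at h1
    omega
  have hmod := Nat.div_add_mod d m
  rw [hdm, mul_one] at hmod
  have hmodlt : d % m < m := Nat.mod_lt _ hm0
  have hmd : m ≤ d ∧ d < 2 * m := by
    constructor <;> omega
  have hmltd : m < d := lt_of_le_of_ne hmd.1 (fun h => hdS (h ▸ hm.1))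
  refine ⟨(Finset.Ioo (d / 2) d).filter (· ∈ S), Finset.filter_subset _ _, ?_, ?_⟩
  · refine ⟨m, ?_⟩
    simp only [Finset.mem_filter, Finset.mem_Ioo]
    exact ⟨⟨by omega, hmltd⟩, hm.1⟩
  · ext n
    simp only [mem_FF, Finset.mem_filter, Finset.mem_Ioo]
    constructor
    · intro hn
      rcases Nat.eq_zero_or_pos n with h | h
      · exact Or.inl h
      rcases le_or_gt (d + 1) n with h' | h'
      · exact Or.inr (Or.inr h')
      · have hmn : m ≤ n := Nat.sInf_le ⟨hn, by omega⟩
        have : n ≠ d := fun h => hdS (h ▸ hn)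
        exact Or.inr (Or.inl ⟨⟨by omega, by omega⟩, hn⟩)
    · intro hn
      rcases hn with h | h | h
      · exact h ▸ h0
      · exact h.2
      · exact hbig n (by omega)

/-- the number of numerical semigroups with Frobenius number d and depth 2 is
2^⌊(d−1)/2⌋ − 1. -/
theorem stmt7 (d : ℕ) (hd : 0 < d) :
    {S : Set ℕ | IsNumericalSemigroup S ∧ S ≠ Set.univ ∧ Frobenius S = d ∧ Depth S = 2}.ncard
      = 2 ^ ((d - 1) / 2) - 1 := by
  classical
  set 𝒳 : Set (Finset ℕ) := ↑(((Finset.Ioo (d / 2) d).powerset).erase ∅) with h𝒳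
  have hmem𝒳 : ∀ X : Finset ℕ, X ∈ 𝒳 ↔ X ⊆ Finset.Ioo (d / 2) d ∧ X.Nonempty := by
    intro X
    constructor
    · intro h
      rw [h𝒳, Finset.mem_coe, Finset.mem_erase, Finset.mem_powerset] at h
      exact ⟨h.2, Finset.nonempty_iff_ne_empty.mpr h.1⟩
    · intro h
      rw [h𝒳, Finset.mem_coe, Finset.mem_erase, Finset.mem_powerset]
      exact ⟨Finset.nonempty_iff_ne_empty.mp h.2, h.1⟩
  have hseteq :
      {S : Set ℕ | IsNumericalSemigroup S ∧ S ≠ Set.univ ∧ Frobenius S = d ∧ Depth S = 2}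
        = FF d '' 𝒳 := by
    ext S
    constructor
    · rintro ⟨h1, h2, h3, h4⟩
      obtain ⟨X, hX, hXne, rfl⟩ := set_eq_FF hd h1 h2 h3 h4
      exact ⟨X, (hmem𝒳 X).mpr ⟨hX, hXne⟩, rfl⟩
    · rintro ⟨X, hX, rfl⟩
      obtain ⟨hX1, hX2⟩ := (hmem𝒳 X).mp hX
      exact FF_mem_set hd hX1 hX2
  rw [hseteq]
  have hinj : Set.InjOn (FF d) 𝒳 := by
    intro X hX Y hY hXY
    obtain ⟨hX1, hX2⟩ := (hmem𝒳 X).mp hX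
    obtain ⟨hY1, hY2⟩ := (hmem𝒳 Y).mp hY
    ext n
    have key : ∀ Z : Finset ℕ, Z ⊆ Finset.Ioo (d / 2) d → ∀ k ∈ Z,
        k ∈ Finset.Ioo (d/2) d := fun Z hZ k hk => hZ hk
    constructor
    · intro hn
      have h1 := key X hX1 n hn
      simp only [Finset.mem_Ioo] at h1
      have : n ∈ FF d Y := hXY ▸ mem_FF.mpr (Or.inr (Or.inl hn))
      rcases mem_FF.mp this with h | h | h
      · omega
      · exact h
      · omega
    · intro hn
      have h1 := key Y hY1 n hn
      simp only [Finset.mem_Ioo] at h1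
      have : n ∈ FF d X := hXY ▸ mem_FF.mpr (Or.inr (Or.inl hn))
      rcases mem_FF.mp this with h | h | h
      · omega
      · exact h
      · omega
  rw [Set.ncard_image_of_injOn hinj, h𝒳, Set.ncard_coe_finset,
    Finset.card_erase_of_mem (Finset.empty_mem_powerset _), Finset.card_powerset,
    Nat.card_Ioo]
  congr 2
  omega
end

section
/- For every integer n > 2, the number of numerical semigroups with maximum primitive n and primitive depth 2 equals Σ_{d | n} μ(n/d) · (2^(⌊(d−1)/2⌋) − 1), where μ is the Möbius function. -/
lemma bezout_nat (a g : ℕ) (ha : 0 < a) : ∃ u w : ℕ, u * a = Nat.gcd a g + w * g := by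
  rcases Nat.eq_zero_or_pos g with hg | hg
  · exact ⟨1, 0, by simp [hg]⟩
  · obtain ⟨X, Y, hXY⟩ : ∃ X Y : ℤ, (Nat.gcd a g : ℤ) = a * X + g * Y :=
      ⟨Nat.gcdA a g, Nat.gcdB a g, Nat.gcd_eq_gcd_ab a g⟩
    set t : ℕ := X.natAbs + Y.natAbs with ht
    have h1 : (1:ℤ) ≤ g := by exact_mod_cast hg
    have h1a : (1:ℤ) ≤ a := by exact_mod_cast ha
    have h2 : (X.natAbs : ℤ) ≤ t := by simp [ht]
    have h3 : (Y.natAbs : ℤ) ≤ t := by simp [ht]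
    have hXabs : -(X.natAbs : ℤ) ≤ X := by omega
    have hYabs : Y ≤ (Y.natAbs : ℤ) := by omega
    have hu : (0:ℤ) ≤ X + t * g := by nlinarith
    have hw : (0:ℤ) ≤ t * a - Y := by nlinarith
    refine ⟨(X + t * g).toNat, (t * a - Y).toNat, ?_⟩
    have key : ((X + t*g).toNat : ℤ) * a = (Nat.gcd a g : ℤ) + ((t*a - Y).toNat : ℤ) * g := by
      rw [Int.toNat_of_nonneg hu, Int.toNat_of_nonneg hw]; ring_nf; linarith [hXY]
    exact_mod_cast key

lemma step_gcd (S : AddSubmonoid ℕ) (a y g : ℕ) (haS : a ∈ S) (hy : y ∈ S)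
    (hyg : y + g ∈ S) : ∃ z, z ∈ S ∧ z + Nat.gcd a g ∈ S := by
  rcases Nat.eq_zero_or_pos a with rfl | ha
  · exact ⟨y, hy, by simpa using hyg⟩
  obtain ⟨u, w, huw⟩ := bezout_nat a g ha
  refine ⟨w * (y + g), nsmul_mem hyg w, ?_⟩
  have : w * (y + g) + Nat.gcd a g = w * y + u * a := by rw [huw]; ring
  rw [this]
  exact add_mem (nsmul_mem hy w) (nsmul_mem haS u)

lemma exists_gcd_pair (P : Finset ℕ) (S : AddSubmonoid ℕ) (hPS : ∀ p ∈ P, p ∈ S) :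
    ∃ y, y ∈ S ∧ y + P.gcd id ∈ S := by
  induction P using Finset.induction_on with
  | empty => exact ⟨0, S.zero_mem, by simpa using S.zero_mem⟩
  | @insert a Q ha ih =>
    obtain ⟨y, hy, hyg⟩ := ih (fun p hp => hPS p (Finset.mem_insert_of_mem hp))
    have haS : a ∈ S := hPS a (Finset.mem_insert_self a Q)
    obtain ⟨z, hz, hzg⟩ := step_gcd S a y (Q.gcd id) haS hy hyg
    exact ⟨z, hz, by rwa [Finset.gcd_insert]⟩

lemma coprime_mem_of_large (S : AddSubmonoid ℕ) (a b : ℕ) (ha : 0 < a)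
    (hab : Nat.Coprime a b) (haS : a ∈ S) (hbS : b ∈ S) (x : ℕ) (hx : a * b ≤ x) :
    x ∈ S := by
  rcases Nat.eq_zero_or_pos b with rfl | hb0
  · have ha1 : a = 1 := by rwa [Nat.coprime_zero_right] at hab
    subst ha1
    simpa using nsmul_mem haS x
  haveI : NeZero a := ⟨ha.ne'⟩
  set u : ZMod a := (x : ZMod a) * (b : ZMod a)⁻¹ with hu
  set k : ℕ := u.val with hk
  have hklt : k < a := ZMod.val_lt u
  have hunit : IsUnit (b : ZMod a) := (ZMod.isUnit_iff_coprime b a).mpr hab.symm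
  have hcong : ((k * b : ℕ) : ZMod a) = (x : ZMod a) := by
    push_cast
    have hku : (k : ZMod a) = u := by
      rw [hk]
      exact (ZMod.natCast_val u).trans (ZMod.cast_id _ _)
    rw [hku, hu, mul_assoc, ZMod.inv_mul_of_unit _ hunit, mul_one]
  have hmod : k * b ≡ x [MOD a] := (ZMod.natCast_eq_natCast_iff _ _ _).mp hcong
  have hkb : k * b ≤ x := le_trans (le_of_lt ((Nat.mul_lt_mul_right hb0).mpr hklt)) hx
  have hdvd : a ∣ x - k * b := (Nat.modEq_iff_dvd' hkb).mp hmod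
  obtain ⟨t, htt⟩ := hdvd
  have hxe : x = k * b + a * t := by omega
  rw [hxe, mul_comm a t]
  exact add_mem (nsmul_mem hbS k) (nsmul_mem haS t)

lemma cofinite_of_consecutive (S : AddSubmonoid ℕ) (y : ℕ) (hy : y ∈ S) (hy1 : y + 1 ∈ S) :
    ((S : Set ℕ)ᶜ).Finite := by
  rcases Nat.eq_zero_or_pos y with rfl | hypos
  · have h1 : (1:ℕ) ∈ S := by simpa using hy1
    have : ∀ x : ℕ, x ∈ S := fun x => by simpa using nsmul_mem h1 x
    simp [Set.eq_univ_iff_forall.mpr this]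
  · apply Set.Finite.subset (Set.finite_Iio (y * (y+1)))
    intro x hx
    simp only [Set.mem_compl_iff, SetLike.mem_coe] at hx
    simp only [Set.mem_Iio]
    by_contra h
    exact hx (coprime_mem_of_large S y (y+1) hypos (Nat.coprime_self_add_right.mpr (Nat.coprime_one_right y)) hy hy1 x (by omega))

lemma genMem_low (P : Finset ℕ) (m : ℕ) (hlow : ∀ p ∈ P, m ≤ p)
    (s : ℕ) (hs : s ∈ AddSubmonoid.closure (↑P : Set ℕ)) (hs0 : s ≠ 0) : m ≤ s := by
  induction hs using AddSubmonoid.closure_induction with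
  | mem x hx => exact hlow x (by exact_mod_cast hx)
  | zero => exact absurd rfl hs0
  | add x y hx hy ihx ihy =>
    rcases Nat.eq_zero_or_pos x with rfl | hx0
    · simpa using ihy (by simpa using hs0)
    · exact le_trans (ihx hx0.ne') (Nat.le_add_right x y)

lemma genMem_cases (P : Finset ℕ) (s : ℕ) (hs : s ∈ AddSubmonoid.closure (↑P : Set ℕ)) :
    s = 0 ∨ s ∈ P ∨ ∃ a ∈ AddSubmonoid.closure (↑P : Set ℕ),
      ∃ b ∈ AddSubmonoid.closure (↑P : Set ℕ), a ≠ 0 ∧ b ≠ 0 ∧ a + b = s := by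
  induction hs using AddSubmonoid.closure_induction with
  | mem x hx => exact Or.inr (Or.inl (by exact_mod_cast hx))
  | zero => exact Or.inl rfl
  | add x y hx hy ihx ihy =>
    rcases Nat.eq_zero_or_pos x with rfl | hx0
    · simpa using ihy
    rcases Nat.eq_zero_or_pos y with rfl | hy0
    · simpa using ihx
    exact Or.inr (Or.inr ⟨x, hx, y, hy, hx0.ne', hy0.ne', rfl⟩)

lemma primitives_gen (P : Finset ℕ) (m n : ℕ) (hlow : ∀ p ∈ P, m ≤ p)
    (hhigh : ∀ p ∈ P, p ≤ n) (hm0 : 0 < m) (hn2m : n < 2 * m) :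
    Primitives (GeneratedBy (↑P : Set ℕ)) = (↑P : Set ℕ) := by
  ext s
  simp only [Primitives, GeneratedBy, Set.mem_setOf_eq, SetLike.mem_coe]
  constructor
  · rintro ⟨hsS, hs0, hnot⟩
    rcases genMem_cases P s hsS with rfl | hsP | ⟨a, ha, b, hb, ha0, hb0, hab⟩
    · exact absurd rfl hs0
    · exact_mod_cast hsP
    · exact absurd hab (hnot a ha b hb ha0 hb0)
  · intro hsP
    have hsP' : s ∈ P := by exact_mod_cast hsP
    refine ⟨AddSubmonoid.subset_closure hsP, (by have := hlow s hsP'; omega), ?_⟩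
    intro a ha b hb ha0 hb0 hab
    have h1 := genMem_low P m hlow a ha ha0
    have h2 := genMem_low P m hlow b hb hb0
    have h3 := hhigh s hsP'
    omega

lemma numerical_gen (P : Finset ℕ) (hgcd : P.gcd id = 1) :
    IsNumericalSemigroup (GeneratedBy (↑P : Set ℕ)) := by
  refine ⟨AddSubmonoid.zero_mem _, fun a ha b hb => AddSubmonoid.add_mem _ ha hb, ?_⟩
  obtain ⟨y, hy, hy1⟩ := exists_gcd_pair P (AddSubmonoid.closure ↑P)
    (fun p hp => AddSubmonoid.subset_closure hp)
  rw [hgcd] at hy1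
  exact cofinite_of_consecutive _ y hy hy1

lemma maxprim_gen (P : Finset ℕ) (m n : ℕ) (hnP : n ∈ P) (hlow : ∀ p ∈ P, m ≤ p)
    (hhigh : ∀ p ∈ P, p ≤ n) (hm0 : 0 < m) (hn2m : n < 2 * m) :
    MaxPrim (GeneratedBy (↑P : Set ℕ)) = n := by
  rw [MaxPrim, primitives_gen P m n hlow hhigh hm0 hn2m]
  apply le_antisymm
  · exact csSup_le ⟨n, by exact_mod_cast hnP⟩ (fun x hx => hhigh x (by exact_mod_cast hx))
  · exact le_csSup (P.bddAbove) (by exact_mod_cast hnP)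

lemma mult_gen (P : Finset ℕ) (m : ℕ) (hmP : m ∈ P) (hlow : ∀ p ∈ P, m ≤ p) (hm0 : 0 < m) :
    Multiplicity (GeneratedBy (↑P : Set ℕ)) = m := by
  rw [Multiplicity]
  apply le_antisymm
  · exact Nat.sInf_le ⟨AddSubmonoid.subset_closure hmP, hm0.ne'⟩
  · exact le_csInf ⟨m, AddSubmonoid.subset_closure hmP, hm0.ne'⟩
      (fun x hx => genMem_low P m hlow x hx.1 hx.2)

lemma primdepth_gen (P : Finset ℕ) (m n : ℕ) (hmP : m ∈ P) (hnP : n ∈ P)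
    (hlow : ∀ p ∈ P, m ≤ p) (hhigh : ∀ p ∈ P, p ≤ n) (hm0 : 0 < m) (hmn : m < n)
    (hn2m : n < 2 * m) : PrimDepth (GeneratedBy (↑P : Set ℕ)) = 2 := by
  rw [PrimDepth, maxprim_gen P m n hnP hlow hhigh hm0 hn2m, mult_gen P m hmP hlow hm0]
  apply Nat.div_eq_of_lt_le <;> omega


section Reverse
variable {S : Set ℕ}

/-- The submonoid corresponding to a numerical semigroup. -/
def toSubmonoid (hS : IsNumericalSemigroup S) : AddSubmonoid ℕ where
  carrier := S
  zero_mem' := hS.1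
  add_mem' := fun {a b} ha hb => hS.2.1 a ha b hb

lemma exists_nonzero (hS : IsNumericalSemigroup S) : ∃ s ∈ S, s ≠ 0 := by
  by_contra h
  push_neg at h
  have hsub : S ⊆ {0} := fun s hs => h s hs
  have : (Sᶜ : Set ℕ).Infinite := by
    apply Set.Infinite.mono (s := {x : ℕ | 1 ≤ x})
    · intro x hx
      simp only [Set.mem_setOf_eq] at hx
      intro hxS
      have := hsub hxS
      simp at this; omega
    · exact Set.infinite_of_not_bddAbove (by
        intro ⟨b, hb⟩
        exact absurd (hb (show b + 1 ∈ {x : ℕ | 1 ≤ x} by simp)) (by omega))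
  exact this hS.2.2

lemma mult_mem (hS : IsNumericalSemigroup S) :
    Multiplicity S ∈ S ∧ Multiplicity S ≠ 0 := by
  obtain ⟨s, hs, hs0⟩ := exists_nonzero hS
  have : Multiplicity S ∈ {s | s ∈ S ∧ s ≠ 0} := Nat.sInf_mem ⟨s, hs, hs0⟩
  exact this

lemma mult_le (hs : s ∈ S) (hs0 : s ≠ 0) : Multiplicity S ≤ s := Nat.sInf_le ⟨hs, hs0⟩

lemma mult_primitive (hS : IsNumericalSemigroup S) : Multiplicity S ∈ Primitives S := by
  obtain ⟨hm, hm0⟩ := mult_mem hS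
  refine ⟨hm, hm0, fun a ha b hb ha0 hb0 hab => ?_⟩
  have h1 := mult_le ha ha0
  have h2 := mult_le hb hb0
  omega

lemma exists_conductor (hS : IsNumericalSemigroup S) : ∃ C, ∀ x, C ≤ x → x ∈ S := by
  rcases Set.eq_empty_or_nonempty (Sᶜ : Set ℕ) with h | h
  · exact ⟨0, fun x _ => by
      by_contra hx
      exact absurd (show x ∈ (Sᶜ : Set ℕ) from hx) (by simp [h])⟩
  · refine ⟨sSup (Sᶜ : Set ℕ) + 1, fun x hx => ?_⟩
    by_contra hxS
    have : x ≤ sSup (Sᶜ : Set ℕ) := le_csSup hS.2.2.bddAbove hxS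
    omega

lemma prims_bddAbove (hS : IsNumericalSemigroup S) : BddAbove (Primitives S) := by
  obtain ⟨C, hC⟩ := exists_conductor hS
  obtain ⟨hm, hm0⟩ := mult_mem hS
  refine ⟨C + Multiplicity S, fun p hp => ?_⟩
  by_contra h
  push_neg at h
  have h1 : p - Multiplicity S ∈ S := hC _ (by omega)
  exact hp.2.2 (Multiplicity S) hm (p - Multiplicity S) h1 hm0 (by omega) (by omega)

lemma maxprim_primitive (hS : IsNumericalSemigroup S) : MaxPrim S ∈ Primitives S :=
  Nat.sSup_mem ⟨_, mult_primitive hS⟩ (prims_bddAbove hS)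

lemma le_maxprim (hS : IsNumericalSemigroup S) (hp : p ∈ Primitives S) : p ≤ MaxPrim S :=
  le_csSup (prims_bddAbove hS) hp

lemma depth_bounds (hS : IsNumericalSemigroup S) (hd : PrimDepth S = 2) :
    Multiplicity S < MaxPrim S ∧ MaxPrim S < 2 * Multiplicity S := by
  set m := Multiplicity S
  set n := MaxPrim S
  have hm0 : m ≠ 0 := (mult_mem hS).2
  have hdm := Nat.div_add_mod (n + m - 1) m
  rw [PrimDepth] at hd
  have hmod : (n + m - 1) % m < m := Nat.mod_lt _ (by omega)
  have hmn : m + 1 ≤ n ∧ n ≤ 2 * m := by rw [hd] at hdm; omega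
  refine ⟨by omega, ?_⟩
  rcases Nat.lt_or_ge n (2 * m) with h | h
  · exact h
  · exfalso
    have hn2 : n = 2 * m := by omega
    have hprim := maxprim_primitive hS
    exact hprim.2.2 m (mult_mem hS).1 m (mult_mem hS).1 hm0 hm0 (by omega)

lemma prims_eq (hS : IsNumericalSemigroup S) (hd : PrimDepth S = 2) :
    Primitives S = {s | s ∈ S ∧ s ≠ 0 ∧ s < 2 * Multiplicity S} := by
  obtain ⟨hmn, hn2m⟩ := depth_bounds hS hd
  ext s
  constructor
  · intro hp
    exact ⟨hp.1, hp.2.1, lt_of_le_of_lt (le_maxprim hS hp) hn2m⟩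
  · rintro ⟨hsS, hs0, hs2m⟩
    refine ⟨hsS, hs0, fun a ha b hb ha0 hb0 hab => ?_⟩
    have h1 := mult_le ha ha0
    have h2 := mult_le hb hb0
    omega

lemma gen_prims (hS : IsNumericalSemigroup S) : GeneratedBy (Primitives S) = S := by
  apply le_antisymm
  · intro s hs
    exact AddSubmonoid.closure_le (S := toSubmonoid hS) |>.mpr (fun p hp => hp.1) hs
  · intro s hsS
    induction s using Nat.strong_induction_on with
    | _ s ih =>
      rcases Nat.eq_zero_or_pos s with rfl | hs0
      · exact AddSubmonoid.zero_mem _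
      by_cases hp : s ∈ Primitives S
      · exact AddSubmonoid.subset_closure hp
      · simp only [Primitives, Set.mem_setOf_eq, not_and, not_forall] at hp
        obtain ⟨a, ha, b, hb, ha0, hb0, hab⟩ := hp hsS hs0.ne'
        push_neg at hab
        have := mult_le ha ha0
        have := mult_le hb hb0
        have hm0 := (mult_mem hS).2
        subst hab
        exact AddSubmonoid.add_mem _ (ih a (by omega) ha) (ih b (by omega) hb)

lemma gcd_prims (hS : IsNumericalSemigroup S) (Pfin : Finset ℕ)
    (hPfin : (↑Pfin : Set ℕ) = Primitives S) : Pfin.gcd id = 1 := by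
  obtain ⟨C, hC⟩ := exists_conductor hS
  set d := Pfin.gcd id
  have hdvd : ∀ s ∈ S, d ∣ s := by
    intro s hsS
    rw [← gen_prims hS, GeneratedBy, ← hPfin] at hsS
    induction hsS using AddSubmonoid.closure_induction with
    | mem x hx => exact Finset.gcd_dvd (by exact_mod_cast hx)
    | zero => exact dvd_zero d
    | add x y hx hy ihx ihy => exact dvd_add ihx ihy
  have h1 := hdvd C (hC C le_rfl)
  have h2 := hdvd (C + 1) (hC _ (by omega))
  have hd1 : d ∣ 1 := by
    have := Nat.dvd_sub h2 h1
    simpa using this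
  exact Nat.dvd_one.mp hd1

end Reverse

def pairsAll (n : ℕ) : Finset (ℕ × Finset ℕ) :=
  ((Finset.range n) ×ˢ (Finset.Ioo 0 n).powerset).filter
    (fun p => n < 2 * p.1 ∧ p.2 ⊆ Finset.Ioo p.1 n)

def pairsG (n : ℕ) : Finset (ℕ × Finset ℕ) :=
  (pairsAll n).filter (fun p => (insert p.1 (insert n p.2)).gcd id = 1)

lemma mem_pairsAll {n m : ℕ} {B : Finset ℕ} :
    (m, B) ∈ pairsAll n ↔ m < n ∧ n < 2 * m ∧ B ⊆ Finset.Ioo m n := by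
  simp only [pairsAll, Finset.mem_filter, Finset.mem_product, Finset.mem_range,
    Finset.mem_powerset]
  constructor
  · rintro ⟨⟨h1, _⟩, h3, h4⟩; exact ⟨h1, h3, h4⟩
  · rintro ⟨h1, h3, h4⟩
    refine ⟨⟨h1, fun b hb => ?_⟩, h3, h4⟩
    have := h4 hb
    simp only [Finset.mem_Ioo] at this ⊢
    omega

lemma sum_two_pow (K : ℕ) : ∑ j ∈ Finset.range K, 2 ^ j = 2 ^ K - 1 := by
  induction K with
  | zero => simp
  | succ k ih =>
    rw [Finset.sum_range_succ, ih]
    have : 1 ≤ 2 ^ k := Nat.one_le_two_pow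
    ring_nf
    omega

lemma card_pairsAll (n : ℕ) : (pairsAll n).card = 2 ^ ((n - 1) / 2) - 1 := by
  have hrw : pairsAll n = (Finset.Ioo (n / 2) n).biUnion
      (fun m => (Finset.Ioo m n).powerset.image (fun B => (m, B))) := by
    ext ⟨m, B⟩
    simp only [Finset.mem_biUnion, Finset.mem_Ioo, Finset.mem_image, Finset.mem_powerset,
      mem_pairsAll]
    constructor
    · rintro ⟨h1, h2, h3⟩
      exact ⟨m, ⟨by omega, h1⟩, B, h3, rfl⟩
    · rintro ⟨m', ⟨hm'1, hm'2⟩, B', hB', heq⟩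
      obtain ⟨rfl, rfl⟩ := Prod.mk.injEq .. ▸ heq
      exact ⟨hm'2, by omega, hB'⟩
  rw [hrw, Finset.card_biUnion]
  · have hcard : ∀ m ∈ Finset.Ioo (n / 2) n,
        ((Finset.Ioo m n).powerset.image (fun B => (m, B))).card = 2 ^ (n - m - 1) := by
      intro m hm
      rw [Finset.card_image_of_injective _ (fun a b h => (Prod.mk.injEq .. ▸ h).2),
        Finset.card_powerset, Nat.card_Ioo]
    rw [Finset.sum_congr rfl hcard]
    have hre : ∑ m ∈ Finset.Ioo (n / 2) n, 2 ^ (n - m - 1)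
        = ∑ j ∈ Finset.range ((n - 1) / 2), 2 ^ j := by
      apply Finset.sum_nbij' (i := fun m => n - m - 1) (j := fun j => n - j - 1)
      · intro a ha; simp only [Finset.mem_Ioo] at ha; simp only [Finset.mem_range]; omega
      · intro a ha; simp only [Finset.mem_range] at ha; simp only [Finset.mem_Ioo]; omega
      · intro a ha; simp only [Finset.mem_Ioo] at ha; omega
      · intro a ha; simp only [Finset.mem_range] at ha; omega
      · intro a ha; rfl
    rw [hre, sum_two_pow]
  · intro x hx y hy hxy
    simp only [Finset.disjoint_left, Finset.mem_image, Finset.mem_powerset]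
    rintro ⟨m, B⟩ ⟨B1, _, heq1⟩ ⟨B2, _, heq2⟩
    obtain ⟨rfl, rfl⟩ := Prod.mk.injEq .. ▸ heq1
    obtain ⟨rfl, _⟩ := Prod.mk.injEq .. ▸ heq2
    exact hxy rfl

lemma gcd_image_mul (g : ℕ) (T : Finset ℕ) :
    (T.image (fun x => g * x)).gcd id = g * T.gcd id := by
  have h1 := Finset.gcd_image (f := (id : ℕ → ℕ)) (g := fun x => g * x) T
  have h2 := Finset.gcd_mul_left (s := T) (f := (id : ℕ → ℕ)) (a := g)
  simp only [Function.comp_def] at h1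
  simpa [h1] using h2

lemma image_div_mul (g : ℕ) (C : Finset ℕ) (hdC : ∀ c ∈ C, g ∣ c) :
    (C.image (fun x => x / g)).image (fun x => g * x) = C := by
  rw [Finset.image_image]
  ext c
  simp only [Finset.mem_image, Function.comp_apply]
  constructor
  · rintro ⟨a, ha, rfl⟩
    rw [Nat.mul_div_cancel' (hdC a ha)]
    exact ha
  · intro hc
    exact ⟨c, hc, Nat.mul_div_cancel' (hdC c hc)⟩

lemma fiber_card (n g : ℕ) (hg : g ∣ n) (hg0 : 0 < g) :
    ((pairsAll n).filter (fun p => (insert p.1 (insert n p.2)).gcd id = g)).card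
      = (pairsG (n / g)).card := by
  have hgn : g * (n / g) = n := Nat.mul_div_cancel' hg
  refine Finset.card_bij' (i := fun p _ => (p.1 / g, p.2.image (fun x => x / g)))
    (j := fun q _ => (g * q.1, q.2.image (fun x => g * x))) ?hi ?hj ?left ?right
  case hi =>
    rintro ⟨M, C⟩ hp
    simp only [Finset.mem_filter, mem_pairsAll] at hp
    obtain ⟨⟨h1, h2, h3⟩, hgcd⟩ := hp
    have hdM : g ∣ M := by
      have h := Finset.gcd_dvd (f := (id : ℕ → ℕ)) (Finset.mem_insert_self M (insert n C))
      rw [hgcd] at h; exact h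
    have hdC : ∀ c ∈ C, g ∣ c := by
      intro c hc
      have hmem : c ∈ insert M (insert n C) := by simp [hc]
      have h := Finset.gcd_dvd (f := (id : ℕ → ℕ)) hmem
      rw [hgcd] at h; exact h
    obtain ⟨m, rfl⟩ := hdM
    have hmdiv : g * m / g = m := Nat.mul_div_cancel_left m hg0
    have himg2 : (insert (g * m / g) (insert (n / g) (C.image (fun x => x / g)))).image
        (fun x => g * x) = insert (g * m) (insert n C) := by
      rw [Finset.image_insert, Finset.image_insert, hmdiv, hgn, image_div_mul g C hdC]
    simp only [pairsG, Finset.mem_filter, mem_pairsAll, hmdiv]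
    refine ⟨⟨?_, ?_, ?_⟩, ?_⟩
    · exact lt_of_mul_lt_mul_left (by rw [hgn]; exact h1) (Nat.zero_le g)
    · exact lt_of_mul_lt_mul_left (by rw [hgn]; calc n < 2 * (g * m) := h2
        _ = g * (2 * m) := by ring) (Nat.zero_le g)
    · intro b hb
      simp only [Finset.mem_image] at hb
      obtain ⟨c, hc, rfl⟩ := hb
      have hcI := h3 hc
      obtain ⟨k, rfl⟩ := hdC c hc
      have hk : g * k / g = k := Nat.mul_div_cancel_left k hg0
      rw [hk]
      simp only [Finset.mem_Ioo] at hcI ⊢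
      constructor
      · exact lt_of_mul_lt_mul_left hcI.1 (Nat.zero_le g)
      · exact lt_of_mul_lt_mul_left (by rw [hgn]; exact hcI.2) (Nat.zero_le g)
    · have hkey : g * (insert m (insert (n / g)
          (C.image (fun x => x / g)))).gcd id = g * 1 := by
        rw [← gcd_image_mul, ← hmdiv, himg2, hgcd, mul_one]
      exact Nat.eq_of_mul_eq_mul_left hg0 hkey
  case hj =>
    rintro ⟨m, B⟩ hq
    simp only [pairsG, Finset.mem_filter, mem_pairsAll] at hq
    obtain ⟨⟨h1, h2, h3⟩, hgcd⟩ := hq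
    simp only [Finset.mem_filter, mem_pairsAll]
    refine ⟨⟨?_, ?_, ?_⟩, ?_⟩
    · calc g * m < g * (n / g) := (Nat.mul_lt_mul_left hg0).mpr h1
      _ = n := hgn
    · calc n = g * (n / g) := hgn.symm
      _ < g * (2 * m) := (Nat.mul_lt_mul_left hg0).mpr h2
      _ = 2 * (g * m) := by ring
    · intro b hb
      simp only [Finset.mem_image] at hb
      obtain ⟨c, hc, rfl⟩ := hb
      have hcI := h3 hc
      simp only [Finset.mem_Ioo] at hcI ⊢
      exact ⟨(Nat.mul_lt_mul_left hg0).mpr hcI.1, by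
        calc g * c < g * (n / g) := (Nat.mul_lt_mul_left hg0).mpr hcI.2
        _ = n := hgn⟩
    · have h : insert (g * m) (insert n (B.image (fun x => g * x)))
          = (insert m (insert (n / g) B)).image (fun x => g * x) := by
        rw [Finset.image_insert, Finset.image_insert, hgn]
      rw [h, gcd_image_mul, hgcd, mul_one]
  case left =>
    rintro ⟨M, C⟩ hp
    simp only [Finset.mem_filter, mem_pairsAll] at hp
    obtain ⟨⟨h1, h2, h3⟩, hgcd⟩ := hp
    have hdM : g ∣ M := by
      have h := Finset.gcd_dvd (f := (id : ℕ → ℕ)) (Finset.mem_insert_self M (insert n C))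
      rw [hgcd] at h; exact h
    have hdC : ∀ c ∈ C, g ∣ c := by
      intro c hc
      have hmem : c ∈ insert M (insert n C) := by simp [hc]
      have h := Finset.gcd_dvd (f := (id : ℕ → ℕ)) hmem
      rw [hgcd] at h; exact h
    simp only [Prod.mk.injEq]
    exact ⟨Nat.mul_div_cancel' hdM, image_div_mul g C hdC⟩
  case right =>
    rintro ⟨m, B⟩ hq
    simp only [Prod.mk.injEq]
    refine ⟨Nat.mul_div_cancel_left m hg0, ?_⟩
    rw [Finset.image_image]
    ext b
    simp only [Finset.mem_image, Function.comp_apply]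
    constructor
    · rintro ⟨a, ha, rfl⟩
      rw [Nat.mul_div_cancel_left a hg0]
      exact ha
    · intro hb
      exact ⟨b, hb, Nat.mul_div_cancel_left b hg0⟩

lemma sum_pairsG_card (n : ℕ) (hn : 0 < n) :
    ∑ d ∈ n.divisors, (pairsG d).card = 2 ^ ((n - 1) / 2) - 1 := by
  have h1 : (pairsAll n).card = ∑ g ∈ n.divisors,
      ((pairsAll n).filter (fun p => (insert p.1 (insert n p.2)).gcd id = g)).card := by
    apply Finset.card_eq_sum_card_fiberwise
    intro p hp
    rw [Finset.mem_coe, Nat.mem_divisors]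
    refine ⟨?_, hn.ne'⟩
    have hmem : n ∈ insert p.1 (insert n p.2) := by simp
    exact Finset.gcd_dvd (f := (id : ℕ → ℕ)) hmem
  have h2 : ∀ g ∈ n.divisors,
      ((pairsAll n).filter (fun p => (insert p.1 (insert n p.2)).gcd id = g)).card
        = (pairsG (n / g)).card := by
    intro g hg
    exact fiber_card n g (Nat.mem_divisors.mp hg).1 (Nat.pos_of_mem_divisors hg)
  rw [← Nat.sum_div_divisors n (fun d => (pairsG d).card), ← Finset.sum_congr rfl h2, ← h1, card_pairsAll n]

lemma moebius_formula (n : ℕ) (hn : 0 < n) :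
    ((pairsG n).card : ℤ) = ∑ d ∈ n.divisors, (ArithmeticFunction.moebius (n / d)) *
      (2 ^ ((d - 1) / 2) - 1 : ℤ) := by
  have key : ∀ N > 0, ∑ i ∈ N.divisors, ((pairsG i).card : ℤ)
      = (2 ^ ((N - 1) / 2) - 1 : ℤ) := by
    intro N hN
    have := sum_pairsG_card N hN
    have hcast : ((∑ d ∈ N.divisors, (pairsG d).card : ℕ) : ℤ)
        = ((2 ^ ((N - 1) / 2) - 1 : ℕ) : ℤ) := congrArg _ this
    push_cast [Nat.cast_sub (Nat.one_le_two_pow)] at hcast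
    exact_mod_cast hcast
  have hinv := (ArithmeticFunction.sum_eq_iff_sum_smul_moebius_eq
    (f := fun i => ((pairsG i).card : ℤ))
    (g := fun N => (2 ^ ((N - 1) / 2) - 1 : ℤ))).mp key n hn
  rw [← hinv, Nat.sum_divisorsAntidiagonal'
    (f := fun a b => (ArithmeticFunction.moebius a) • ((2:ℤ) ^ ((b - 1) / 2) - 1))]
  apply Finset.sum_congr rfl
  intro d _
  rw [zsmul_eq_mul]
  push_cast
  ring

lemma mem_pairsG {n m : ℕ} {B : Finset ℕ} :
    (m, B) ∈ pairsG n ↔ m < n ∧ n < 2 * m ∧ B ⊆ Finset.Ioo m n ∧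
      (insert m (insert n B)).gcd id = 1 := by
  simp only [pairsG, Finset.mem_filter, mem_pairsAll]
  tauto


noncomputable def genOf (n : ℕ) (p : ℕ × Finset ℕ) : Set ℕ :=
  GeneratedBy (↑(insert p.1 (insert n p.2)) : Set ℕ)

lemma pair_facts {n m : ℕ} {B : Finset ℕ} (h : (m, B) ∈ pairsG n) :
    let P := insert m (insert n B)
    m ∈ P ∧ n ∈ P ∧ (∀ p ∈ P, m ≤ p) ∧ (∀ p ∈ P, p ≤ n) ∧ 0 < m ∧ m < n ∧ n < 2 * m ∧
      P.gcd id = 1 := by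
  rw [mem_pairsG] at h
  obtain ⟨h1, h2, h3, h4⟩ := h
  refine ⟨Finset.mem_insert_self _ _, Finset.mem_insert_of_mem (Finset.mem_insert_self _ _),
    ?_, ?_, by omega, h1, h2, h4⟩
  · intro p hp
    rcases Finset.mem_insert.mp hp with rfl | hp
    · exact le_rfl
    rcases Finset.mem_insert.mp hp with rfl | hp
    · omega
    · have := h3 hp; simp only [Finset.mem_Ioo] at this; omega
  · intro p hp
    rcases Finset.mem_insert.mp hp with rfl | hp
    · omega
    rcases Finset.mem_insert.mp hp with rfl | hp
    · exact le_rfl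
    · have := h3 hp; simp only [Finset.mem_Ioo] at this; omega

lemma genOf_mem_set {n : ℕ} {p : ℕ × Finset ℕ} (h : p ∈ pairsG n) :
    IsNumericalSemigroup (genOf n p) ∧ MaxPrim (genOf n p) = n ∧ PrimDepth (genOf n p) = 2 := by
  obtain ⟨m, B⟩ := p
  obtain ⟨hmP, hnP, hlow, hhigh, hm0, hmn, hn2m, hgcd⟩ := pair_facts h
  exact ⟨numerical_gen _ hgcd, maxprim_gen _ m n hnP hlow hhigh hm0 hn2m,
    primdepth_gen _ m n hmP hnP hlow hhigh hm0 hmn hn2m⟩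

lemma genOf_primitives {n : ℕ} {p : ℕ × Finset ℕ} (h : p ∈ pairsG n) :
    Primitives (genOf n p) = (↑(insert p.1 (insert n p.2)) : Set ℕ) := by
  obtain ⟨m, B⟩ := p
  obtain ⟨hmP, hnP, hlow, hhigh, hm0, hmn, hn2m, hgcd⟩ := pair_facts h
  exact primitives_gen _ m n hlow hhigh hm0 hn2m

lemma genOf_injOn (n : ℕ) : Set.InjOn (genOf n) ↑(pairsG n) := by
  rintro ⟨m, B⟩ hp ⟨m', B'⟩ hp' heq
  simp only [Finset.mem_coe] at hp hp'
  have h1 : (↑(insert m (insert n B)) : Set ℕ) = ↑(insert m' (insert n B')) := by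
    rw [← genOf_primitives hp, ← genOf_primitives hp', heq]
  have h2 : insert m (insert n B) = insert m' (insert n B') := Finset.coe_injective h1
  rw [mem_pairsG] at hp hp'
  obtain ⟨hm, hnm, hB, _⟩ := hp
  obtain ⟨hm', hnm', hB', _⟩ := hp'
  have hmm : m = m' := by
    have hmem : m ∈ insert m' (insert n B') := h2 ▸ Finset.mem_insert_self _ _
    have hmem' : m' ∈ insert m (insert n B) := h2 ▸ Finset.mem_insert_self _ _
    rcases Finset.mem_insert.mp hmem with h | h
    · exact h
    rcases Finset.mem_insert.mp h with h | h
    · omega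
    · have hmB' := hB' h
      simp only [Finset.mem_Ioo] at hmB'
      rcases Finset.mem_insert.mp hmem' with h' | h'
      · omega
      rcases Finset.mem_insert.mp h' with h' | h'
      · omega
      · have := hB h'; simp only [Finset.mem_Ioo] at this; omega
  subst hmm
  have hBB : B = B' := by
    ext b
    constructor
    · intro hb
      have hbI := hB hb; simp only [Finset.mem_Ioo] at hbI
      have : b ∈ insert m (insert n B') :=
        h2 ▸ Finset.mem_insert_of_mem (Finset.mem_insert_of_mem hb)
      rcases Finset.mem_insert.mp this with h | h
      · omega
      rcases Finset.mem_insert.mp h with h | h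
      · omega
      · exact h
    · intro hb
      have hbI := hB' hb; simp only [Finset.mem_Ioo] at hbI
      have : b ∈ insert m (insert n B) :=
        h2.symm ▸ Finset.mem_insert_of_mem (Finset.mem_insert_of_mem hb)
      rcases Finset.mem_insert.mp this with h | h
      · omega
      rcases Finset.mem_insert.mp h with h | h
      · omega
      · exact h
  rw [hBB]

lemma set_eq_image (n : ℕ) :
    {S : Set ℕ | IsNumericalSemigroup S ∧ MaxPrim S = n ∧ PrimDepth S = 2}
      = genOf n '' ↑(pairsG n) := by
  ext S
  constructor
  · rintro ⟨hS, hmax, hdepth⟩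
    set m := Multiplicity S with hm
    have hfin : (Primitives S).Finite := by
      apply Set.Finite.subset (Set.finite_Icc 0 n)
      intro p hp
      simp only [Set.mem_Icc]
      exact ⟨Nat.zero_le _, hmax ▸ le_maxprim hS hp⟩
    set Pfin := hfin.toFinset with hPdef
    have hPcoe : (↑Pfin : Set ℕ) = Primitives S := hfin.coe_toFinset
    have hmPfin : m ∈ Pfin := by rw [← Finset.mem_coe, hPcoe]; exact mult_primitive hS
    have hnPfin : n ∈ Pfin := by
      rw [← Finset.mem_coe, hPcoe, ← hmax]; exact maxprim_primitive hS
    obtain ⟨hmn, hn2m⟩ := depth_bounds hS hdepth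
    rw [hmax] at hmn hn2m
    set B := Pfin \ {m, n} with hBdef
    have hins : insert m (insert n B) = Pfin := by
      ext x
      simp only [Finset.mem_insert, hBdef, Finset.mem_sdiff, Finset.mem_insert,
        Finset.mem_singleton]
      constructor
      · rintro (rfl | rfl | ⟨hx, _⟩) <;> assumption
      · intro hx
        by_cases h1 : x = m
        · exact Or.inl h1
        by_cases h2 : x = n
        · exact Or.inr (Or.inl h2)
        · exact Or.inr (Or.inr ⟨hx, by tauto⟩)
    have hpairs : (m, B) ∈ pairsG n := by
      rw [mem_pairsG]
      refine ⟨hmn, hn2m, ?_, ?_⟩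
      · intro b hb
        rw [hBdef, Finset.mem_sdiff] at hb
        obtain ⟨hbP, hbne⟩ := hb
        simp only [Finset.mem_insert, Finset.mem_singleton] at hbne
        push_neg at hbne
        have hbprim : b ∈ Primitives S := by rw [← hPcoe]; exact_mod_cast hbP
        have h1 : m ≤ b := mult_le hbprim.1 hbprim.2.1
        have h2 : b ≤ n := hmax ▸ le_maxprim hS hbprim
        simp only [Finset.mem_Ioo]
        omega
      · rw [hins]
        exact gcd_prims hS Pfin hPcoe
    refine ⟨(m, B), hpairs, ?_⟩
    show GeneratedBy _ = S
    rw [show (↑(insert m (insert n B)) : Set ℕ) = Primitives S by rw [hins]; exact hPcoe]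
    exact gen_prims hS
  · rintro ⟨p, hp, rfl⟩
    exact genOf_mem_set (by exact_mod_cast hp)

lemma ncard_set_eq (n : ℕ) :
    {S : Set ℕ | IsNumericalSemigroup S ∧ MaxPrim S = n ∧ PrimDepth S = 2}.ncard
      = (pairsG n).card := by
  rw [set_eq_image n, Set.ncard_image_of_injOn (genOf_injOn n), Set.ncard_coe_finset]

/-- A_n(2) = Σ_{d∣n} μ(n/d) · (2^⌊(d−1)/2⌋ − 1). -/
theorem stmt12 (n : ℕ) (hn : 2 < n) :
    ({S : Set ℕ | IsNumericalSemigroup S ∧ MaxPrim S = n ∧ PrimDepth S = 2}.ncard : ℤ)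
      = ∑ d ∈ n.divisors, (ArithmeticFunction.moebius (n / d)) *
          (2 ^ ((d - 1) / 2) - 1 : ℤ) := by
  rw [ncard_set_eq n]
  exact moebius_formula n (by omega)
end

section
/- For every integer n > 2, the number of subsets of the integer interval (n/2, n] that contain n and have greatest common divisor equal to 1 is Σ_{d | n} μ(n/d) · (2^(⌊(d−1)/2⌋) − 1), where μ is the Möbius function. -/
open Finset in
lemma setGcd_coe_finset (F : Finset ℕ) {d : ℕ} (hd : d ∈ F) (hd0 : d ≠ 0) :
    SetGcd ↑F = F.gcd id := by
  have hg0 : F.gcd id ≠ 0 := fun h => hd0 (Finset.gcd_eq_zero_iff.mp h d hd)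
  have hset : {e : ℕ | ∀ y ∈ (↑F : Set ℕ), e ∣ y} = {e | e ∣ F.gcd id} := by
    ext e
    constructor
    · intro h
      exact Finset.dvd_gcd fun b hb => h b hb
    · intro h y hy
      exact h.trans (Finset.gcd_dvd hy)
  rw [SetGcd, hset]
  apply le_antisymm
  · exact csSup_le ⟨1, one_dvd _⟩ fun e he => Nat.le_of_dvd (Nat.pos_of_ne_zero hg0) he
  · exact le_csSup ⟨F.gcd id, fun e he => Nat.le_of_dvd (Nat.pos_of_ne_zero hg0) he⟩ dvd_rfl

open Classical in
lemma ncard_subsets (T : Finset ℕ) (P : Set ℕ → Prop) :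
    {A : Set ℕ | A ⊆ ↑T ∧ P A}.ncard
      = (T.powerset.filter (fun F : Finset ℕ => P ↑F)).card := by
  set s : Finset (Finset ℕ) := T.powerset.filter (fun F : Finset ℕ => P ↑F) with hs
  have himg : {A : Set ℕ | A ⊆ ↑T ∧ P A}
      = (fun F : Finset ℕ => (↑F : Set ℕ)) '' (s : Set (Finset ℕ)) := by
    ext A
    simp only [Set.mem_setOf_eq, Set.mem_image, Finset.mem_coe, hs, Finset.mem_filter,
      Finset.mem_powerset]
    constructor
    · rintro ⟨hsub, hP⟩
      have hfin : A.Finite := T.finite_toSet.subset hsub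
      refine ⟨hfin.toFinset, ⟨?_, ?_⟩, hfin.coe_toFinset⟩
      · exact Finset.coe_subset.mp (by rw [hfin.coe_toFinset]; exact hsub)
      · rw [hfin.coe_toFinset]; exact hP
    · rintro ⟨F, ⟨hFT, hP⟩, rfl⟩
      exact ⟨Finset.coe_subset.mpr hFT, hP⟩
  rw [himg, Set.ncard_image_of_injective _ Finset.coe_injective, Set.ncard_coe_finset]

/-- The number of subsets of (m/2, m] containing m with gcd 1. -/
noncomputable def cnt (m : ℕ) : ℕ :=
  ((Finset.Ioc (m / 2) m).powerset.filter (fun F => m ∈ F ∧ F.gcd id = 1)).card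

lemma card_full (m : ℕ) (hm : 0 < m) :
    ((Finset.Ioc (m / 2) m).powerset.filter (fun F => m ∈ F)).card = 2 ^ ((m - 1) / 2) := by
  classical
  set T := Finset.Ioc (m / 2) m with hT
  have hmT : m ∈ T := by simp only [hT, Finset.mem_Ioc]; omega
  have hcard : ((T.powerset.filter (fun F => m ∈ F))).card = ((T.erase m).powerset).card := by
    refine Finset.card_bij' (fun F _ => F.erase m) (fun B _ => insert m B) ?hi ?hj ?hli ?hri
    case hi =>
      intro F hF
      simp only [Finset.mem_filter, Finset.mem_powerset] at hF
      exact Finset.mem_powerset.mpr (Finset.erase_subset_erase _ hF.1)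
    case hj =>
      intro B hB
      simp only [Finset.mem_powerset] at hB
      simp only [Finset.mem_filter, Finset.mem_powerset]
      exact ⟨Finset.insert_subset hmT (hB.trans (Finset.erase_subset _ _)),
        Finset.mem_insert_self _ _⟩
    case hli =>
      intro F hF
      simp only [Finset.mem_filter] at hF
      exact Finset.insert_erase hF.2
    case hri =>
      intro B hB
      simp only [Finset.mem_powerset] at hB
      exact Finset.erase_insert (fun h => (Finset.mem_erase.mp (hB h)).1 rfl)
  rw [hcard, Finset.card_powerset, Finset.card_erase_of_mem hmT, Nat.card_Ioc]
  congr 1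
  omega

open Finset in
lemma card_fiber (g e : ℕ) (hg0 : 0 < g) (he0 : 0 < e) :
    ((((Finset.Ioc ((g * e) / 2) (g * e)).powerset.filter
        (fun F => g * e ∈ F)).filter (fun F => F.gcd id = g))).card = cnt e := by
  classical
  rw [cnt]
  refine Finset.card_bij' (fun F _ => F.image (· / g)) (fun B _ => B.image (· * g))
    ?hi ?hj ?hli ?hri
  case hi =>
    intro F hF
    simp only [Finset.mem_filter, Finset.mem_powerset] at hF
    obtain ⟨⟨hsub, hmem⟩, hgcd⟩ := hF
    have hdvd : ∀ y ∈ F, g ∣ y := fun y hy => hgcd ▸ Finset.gcd_dvd hy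
    simp only [Finset.mem_filter, Finset.mem_powerset]
    refine ⟨?_, ?_, ?_⟩
    · intro x hx
      simp only [Finset.mem_image] at hx
      obtain ⟨y, hy, rfl⟩ := hx
      obtain ⟨u, rfl⟩ := hdvd y hy
      have hy2 := hsub hy
      simp only [Finset.mem_Ioc] at hy2 ⊢
      rw [Nat.mul_div_cancel_left u hg0]
      have h1 : g * e < 2 * (g * u) := by omega
      have h1' : g * e < g * (2 * u) := by calc g * e < 2 * (g * u) := h1
                                               _ = g * (2 * u) := by ring
      have h2 : e < 2 * u := Nat.lt_of_mul_lt_mul_left h1'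
      have h3 : u ≤ e := Nat.le_of_mul_le_mul_left hy2.2 hg0
      omega
    · simp only [Finset.mem_image]
      exact ⟨g * e, hmem, by rw [Nat.mul_div_cancel_left e hg0]⟩
    · rw [Finset.gcd_image]
      rw [show (id ∘ (· / g)) = fun y : ℕ => y / F.gcd id by funext y; simp [hgcd]]
      exact Finset.gcd_div_id_eq_one hmem (by positivity)
  case hj =>
    intro B hB
    simp only [Finset.mem_filter, Finset.mem_powerset] at hB
    obtain ⟨hsub, hmem, hgcd⟩ := hB
    simp only [Finset.mem_filter, Finset.mem_powerset]
    refine ⟨⟨?_, ?_⟩, ?_⟩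
    · intro x hx
      simp only [Finset.mem_image] at hx
      obtain ⟨u, hu, rfl⟩ := hx
      have hu2 := hsub hu
      simp only [Finset.mem_Ioc] at hu2 ⊢
      have h2 : e < 2 * u := by omega
      constructor
      · have h2' : g * e < g * (2 * u) := (Nat.mul_lt_mul_left hg0).mpr h2
        have heq : g * (2 * u) = 2 * (u * g) := by ring
        omega
      · have hle : g * u ≤ g * e := Nat.mul_le_mul_left g hu2.2
        have heq : u * g = g * u := by ring
        omega
    · simp only [Finset.mem_image]
      exact ⟨e, hmem, by ring⟩
    · rw [Finset.gcd_image]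
      rw [show (id ∘ (· * g)) = fun u : ℕ => g * u by funext u; simp [Nat.mul_comm]]
      rw [Finset.gcd_mul_left (f := fun u : ℕ => u)]
      rw [show (B.gcd fun u : ℕ => u) = B.gcd id from rfl, hgcd]
      simp
  case hli =>
    intro F hF
    simp only [Finset.mem_filter, Finset.mem_powerset] at hF
    obtain ⟨⟨hsub, hmem⟩, hgcd⟩ := hF
    have hdvd : ∀ y ∈ F, g ∣ y := fun y hy => hgcd ▸ Finset.gcd_dvd hy
    show (F.image (· / g)).image (· * g) = F
    rw [Finset.image_image]
    have himg : F.image ((· * g) ∘ (· / g)) = F.image id :=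
      Finset.image_congr fun y hy => by
        simp only [Function.comp_apply, id]
        exact Nat.div_mul_cancel (hdvd y hy)
    rw [himg, Finset.image_id]
  case hri =>
    intro B hB
    show (B.image (· * g)).image (· / g) = B
    rw [Finset.image_image]
    have himg : B.image ((· / g) ∘ (· * g)) = B.image id :=
      Finset.image_congr fun u _ => by
        simp only [Function.comp_apply, id]
        exact Nat.mul_div_cancel u hg0
    rw [himg, Finset.image_id]

lemma sum_cnt (m : ℕ) (hm : 0 < m) :
    ∑ e ∈ m.divisors, cnt e = 2 ^ ((m - 1) / 2) := by
  classical
  rw [← card_full m hm]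
  rw [Finset.card_eq_sum_card_fiberwise (f := fun F : Finset ℕ => F.gcd id)
    (t := m.divisors) (fun F hF => by
      simp only [Finset.mem_coe, Finset.mem_filter, Finset.mem_powerset] at hF
      exact Nat.mem_divisors.mpr ⟨Finset.gcd_dvd hF.2, hm.ne'⟩)]
  rw [← Nat.sum_div_divisors m cnt]
  apply Finset.sum_congr rfl
  intro g hg
  obtain ⟨hdvd, hm0⟩ := Nat.mem_divisors.mp hg
  have hg0 : 0 < g := Nat.pos_of_mem_divisors hg
  have he0 : 0 < m / g := Nat.div_pos (Nat.le_of_dvd hm hdvd) hg0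
  have hge : g * (m / g) = m := Nat.mul_div_cancel' hdvd
  have hfib := card_fiber g (m / g) hg0 he0
  rw [hge] at hfib
  exact hfib.symm

open ArithmeticFunction ArithmeticFunction.Moebius in
lemma cnt_eq (n : ℕ) (hn : 1 < n) :
    (cnt n : ℤ) = ∑ d ∈ n.divisors, (μ (n / d) : ℤ) * (2 ^ ((d - 1) / 2) - 1) := by
  have h1 : ∀ m > 0, ∑ i ∈ m.divisors, ((cnt i : ℤ)) = (2 : ℤ) ^ ((m - 1) / 2) := by
    intro m hm
    exact_mod_cast sum_cnt m hm
  have h2 := (sum_eq_iff_sum_mul_moebius_eq (f := fun i => (cnt i : ℤ))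
    (g := fun m => (2 : ℤ) ^ ((m - 1) / 2))).mp h1 n (by omega)
  have h3 : ∀ m > 0, ∑ i ∈ m.divisors, (if i = 1 then (1 : ℤ) else 0) = (1 : ℤ) := by
    intro m hm
    rw [Finset.sum_ite_eq' m.divisors 1 (fun _ => (1 : ℤ))]
    simp [Nat.one_mem_divisors.mpr hm.ne']
  have h4 := (sum_eq_iff_sum_mul_moebius_eq
    (f := fun i => (if i = 1 then (1 : ℤ) else 0)) (g := fun _ => (1 : ℤ))).mp h3 n (by omega)
  simp only [Int.cast_id] at h2 h4
  rw [Nat.sum_divisorsAntidiagonal' (f := fun a b => (μ a : ℤ) * (2 : ℤ) ^ ((b - 1) / 2))] at h2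
  rw [Nat.sum_divisorsAntidiagonal' (f := fun a b => (μ a : ℤ) * 1)] at h4
  rw [if_neg (by omega : n ≠ 1)] at h4
  calc (cnt n : ℤ) = (cnt n : ℤ) - 0 := by ring
    _ = (∑ i ∈ n.divisors, (μ (n / i) : ℤ) * (2 : ℤ) ^ ((i - 1) / 2))
        - ∑ i ∈ n.divisors, (μ (n / i) : ℤ) * 1 := by rw [h2, h4]
    _ = ∑ d ∈ n.divisors, (μ (n / d) : ℤ) * (2 ^ ((d - 1) / 2) - 1) := by
        rw [← Finset.sum_sub_distrib]
        apply Finset.sum_congr rfl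
        intro d _
        ring

/-- the number of subsets of (n/2, n] containing n with gcd 1 is
Σ_{d∣n} μ(n/d) · (2^⌊(d−1)/2⌋ − 1). -/
theorem stmt13 (n : ℕ) (hn : 2 < n) :
    ({A : Set ℕ | A ⊆ {x | n < 2 * x ∧ x ≤ n} ∧ n ∈ A ∧ SetGcd A = 1}.ncard : ℤ)
      = ∑ d ∈ n.divisors, (ArithmeticFunction.moebius (n / d)) *
          (2 ^ ((d - 1) / 2) - 1 : ℤ) := by
  classical
  have hset : {x : ℕ | n < 2 * x ∧ x ≤ n} = ↑(Finset.Ioc (n / 2) n) := by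
    ext x
    simp only [Set.mem_setOf_eq, Finset.coe_Ioc, Set.mem_Ioc]
    omega
  have hrw : {A : Set ℕ | A ⊆ {x | n < 2 * x ∧ x ≤ n} ∧ n ∈ A ∧ SetGcd A = 1}
      = {A : Set ℕ | A ⊆ ↑(Finset.Ioc (n / 2) n) ∧ n ∈ A ∧ SetGcd A = 1} := by
    rw [hset]
  have hnc := ncard_subsets (Finset.Ioc (n / 2) n) (fun A => n ∈ A ∧ SetGcd A = 1)
  beta_reduce at hnc
  rw [hrw, hnc]
  convert cnt_eq n (by omega) using 2
  rw [cnt]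
  congr 1
  ext F
  simp only [Finset.mem_filter, Finset.mem_coe]
  refine and_congr_right fun _ => ?_
  constructor
  · rintro ⟨hmem, hgcd⟩
    exact ⟨hmem, by rw [← setGcd_coe_finset F hmem (by omega)]; exact hgcd⟩
  · rintro ⟨hmem, hgcd⟩
    exact ⟨hmem, by rw [setGcd_coe_finset F hmem (by omega)]; exact hgcd⟩
end

section
/- Let T be a numerical semigroup with maximum primitive d, let n be a positive multiple of d, and set T' = (⟨(n/d)·P(T)⟩ \ {n}) ∪ {k ∈ ℕ : k > n}, where P(T) is the set of primitives of T. Then T' is a numerical semigroup with Frobenius number n, and applying the map S ↦ ⟨L'(S)/gcd(L'(S))⟩ to T' recovers T, where L'(S) = {s ∈ S : s < F(S)} ∪ {F(S)}. -/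
/-! ### Auxiliary lemmas -/

/-- A numerical semigroup as an `AddSubmonoid`. -/
noncomputable def NSsub (T : Set ℕ) (hT : IsNumericalSemigroup T) : AddSubmonoid ℕ where
  carrier := T
  zero_mem' := hT.1
  add_mem' := fun {a b} ha hb => hT.2.1 a ha b hb

lemma NS_large_mem {T : Set ℕ} (hT : IsNumericalSemigroup T) {t : ℕ}
    (ht : sSup (Tᶜ : Set ℕ) < t) : t ∈ T := by
  by_contra h
  exact absurd (le_csSup hT.2.2.bddAbove h) (not_le.mpr ht)

lemma NS_closure_primitives {T : Set ℕ} (hT : IsNumericalSemigroup T) :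
    (AddSubmonoid.closure (Primitives T) : Set ℕ) = T := by
  apply le_antisymm
  · exact (AddSubmonoid.closure_le (S := NSsub T hT)).mpr (fun p hp => hp.1)
  · intro s
    induction s using Nat.strong_induction_on with
    | _ s ih =>
      intro hs
      rcases eq_or_ne s 0 with rfl | hs0
      · exact AddSubmonoid.zero_mem _
      by_cases hp : s ∈ Primitives T
      · exact AddSubmonoid.subset_closure hp
      · have hex : ∃ a ∈ T, ∃ b ∈ T, a ≠ 0 ∧ b ≠ 0 ∧ a + b = s := by
          by_contra hcon
          push_neg at hcon
          exact hp ⟨hs, hs0, fun a ha b hb ha0 hb0 => hcon a ha b hb ha0 hb0⟩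
        obtain ⟨a, ha, b, hb, ha0, hb0, hab⟩ := hex
        have hal : a < s := by omega
        have hbl : b < s := by omega
        have := AddSubmonoid.add_mem _ (ih a hal ha) (ih b hbl hb)
        rwa [hab] at this
      
lemma NS_mult_mem {T : Set ℕ} (hT : IsNumericalSemigroup T) :
    Multiplicity T ∈ T ∧ Multiplicity T ≠ 0 := by
  have hinf : T.Infinite := by
    have := hT.2.2.infinite_compl
    rwa [compl_compl] at this
  obtain ⟨x, hx⟩ := (hinf.diff (Set.finite_singleton 0)).nonempty
  exact Nat.sInf_mem (⟨x, hx.1, hx.2⟩ : {s | s ∈ T ∧ s ≠ 0}.Nonempty)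

lemma NS_primitives_nonempty {T : Set ℕ} (hT : IsNumericalSemigroup T) :
    (Primitives T).Nonempty := by
  obtain ⟨hm, hm0⟩ := NS_mult_mem hT
  refine ⟨Multiplicity T, hm, hm0, fun a ha b hb ha0 hb0 hab => ?_⟩
  have : Multiplicity T ≤ a := Nat.sInf_le ⟨ha, ha0⟩
  omega

lemma NS_primitives_bddAbove {T : Set ℕ} (hT : IsNumericalSemigroup T) :
    BddAbove (Primitives T) := by
  refine ⟨Multiplicity T + sSup (Tᶜ : Set ℕ), fun p hp => ?_⟩
  by_contra hlt
  push_neg at hlt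
  obtain ⟨hm, hm0⟩ := NS_mult_mem hT
  have hpm : p - Multiplicity T ∈ T := NS_large_mem hT (by omega)
  exact hp.2.2 (Multiplicity T) hm (p - Multiplicity T) hpm hm0 (by omega) (by omega)

lemma NS_maxPrim_mem {T : Set ℕ} (hT : IsNumericalSemigroup T) :
    MaxPrim T ∈ Primitives T :=
  Nat.sSup_mem (NS_primitives_nonempty hT) (NS_primitives_bddAbove hT)

lemma NS_le_maxPrim {T : Set ℕ} (hT : IsNumericalSemigroup T) {p : ℕ}
    (hp : p ∈ Primitives T) : p ≤ MaxPrim T :=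
  le_csSup (NS_primitives_bddAbove hT) hp

/-- for T with maximum primitive d and n a positive multiple of d,
T' = (⟨(n/d)·P(T)⟩ \ {n}) ∪ (n, ∞) is a numerical semigroup with Frobenius number n,
and Ψ(T') = T where Ψ(S) = ⟨L'(S)/gcd(L'(S))⟩. -/
theorem stmt19 (T : Set ℕ) (hT : IsNumericalSemigroup T) (d : ℕ) (hd : MaxPrim T = d)
    (n : ℕ) (hn : 0 < n) (hdvd : d ∣ n) :
    IsNumericalSemigroup
      ((GeneratedBy ((fun a => (n / d) * a) '' Primitives T) \ {n}) ∪ Set.Ioi n) ∧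
    Frobenius
      ((GeneratedBy ((fun a => (n / d) * a) '' Primitives T) \ {n}) ∪ Set.Ioi n) = n ∧
    Psi ((GeneratedBy ((fun a => (n / d) * a) '' Primitives T) \ {n}) ∪ Set.Ioi n) = T := by
  have hd0 : 0 < d := Nat.pos_of_dvd_of_pos hdvd hn
  set q := n / d with hq
  have hqd : q * d = n := Nat.div_mul_cancel hdvd
  have hq0 : 0 < q := Nat.div_pos (Nat.le_of_dvd hn hdvd) hd0
  have hdP : d ∈ Primitives T := hd ▸ NS_maxPrim_mem hT
  have hmax : ∀ p ∈ Primitives T, p ≤ d := fun p hp => hd ▸ NS_le_maxPrim hT hp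
  -- the generated submonoid is q · T
  have hQ : GeneratedBy ((fun a => q * a) '' Primitives T) = (fun a => q * a) '' T := by
    have h1 : (AddSubmonoid.closure (Primitives T)).map (AddMonoidHom.mulLeft q)
        = AddSubmonoid.closure ((fun a => q * a) '' Primitives T) := by
      rw [AddMonoidHom.map_mclosure]
      rfl
    rw [GeneratedBy, ← h1, AddSubmonoid.coe_map, NS_closure_primitives hT]
    rfl
  set T' : Set ℕ :=
    (GeneratedBy ((fun a => q * a) '' Primitives T) \ {n}) ∪ Set.Ioi n with hT'
  have hmemQ : ∀ x, x ∈ GeneratedBy ((fun a => q * a) '' Primitives T) ↔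
      ∃ t ∈ T, q * t = x := by
    intro x; rw [hQ]; exact Set.mem_image _ _ _
  -- Part 1: numerical semigroup
  have part1 : IsNumericalSemigroup T' := by
    refine ⟨?_, ?_, ?_⟩
    · left
      refine ⟨(hmemQ 0).mpr ⟨0, hT.1, by ring⟩, ?_⟩
      simp only [Set.mem_singleton_iff]
      omega
    · intro a ha b hb
      by_cases hab : n < a + b
      · exact Or.inr hab
      · push_neg at hab
        have ha' : a ∈ GeneratedBy ((fun a => q * a) '' Primitives T) ∧ a ≠ n := by
          rcases ha with ⟨h1, h2⟩ | h1
          · exact ⟨h1, by simpa using h2⟩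
          · exfalso; simp only [Set.mem_Ioi] at h1; omega
        have hb' : b ∈ GeneratedBy ((fun a => q * a) '' Primitives T) ∧ b ≠ n := by
          rcases hb with ⟨h1, h2⟩ | h1
          · exact ⟨h1, by simpa using h2⟩
          · exfalso; simp only [Set.mem_Ioi] at h1; omega
        obtain ⟨s, hsT, hsa⟩ := (hmemQ a).mp ha'.1
        obtain ⟨t, htT, htb⟩ := (hmemQ b).mp hb'.1
        left
        refine ⟨(hmemQ (a + b)).mpr ⟨s + t, hT.2.1 s hsT t htT, by rw [mul_add, hsa, htb]⟩, ?_⟩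
        simp only [Set.mem_singleton_iff]
        intro habn
        -- a + b = n = q * d, so s + t = d, contradicting primitivity of d
        have hst : s + t = d := by
          have : q * (s + t) = q * d := by rw [mul_add, hsa, htb, habn, hqd]
          exact Nat.eq_of_mul_eq_mul_left hq0 this
        have hs0 : s ≠ 0 := by
          rintro rfl
          apply hb'.2
          omega
        have ht0 : t ≠ 0 := by
          rintro rfl
          apply ha'.2
          omega
        exact hdP.2.2 s hsT t htT hs0 ht0 hst
    · apply Set.Finite.subset (Set.finite_Iic n)
      intro x hx
      simp only [Set.mem_compl_iff, hT', Set.mem_union, Set.mem_Ioi, not_or] at hx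
      exact not_lt.mp hx.2
  -- n ∉ T'
  have hnnot : n ∉ T' := by
    rintro (⟨_, h2⟩ | h)
    · exact h2 rfl
    · exact lt_irrefl n h
  -- Part 2: Frobenius
  have part2 : Frobenius T' = n := by
    have hbdd : BddAbove (T'ᶜ : Set ℕ) := part1.2.2.bddAbove
    apply le_antisymm
    · apply csSup_le ⟨n, hnnot⟩
      intro x hx
      by_contra hlt
      push_neg at hlt
      exact hx (Or.inr hlt)
    · exact le_csSup hbdd hnnot
  -- Part 3: Psi
  set A : Set ℕ := (T ∩ Set.Iio d) ∪ {d} with hA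
  have hL : Lefts' T' = (fun a => q * a) '' A := by
    ext x
    simp only [Lefts', Lefts, part2, Set.mem_union, Set.mem_setOf_eq, Set.mem_singleton_iff,
      Set.mem_image, hA, Set.mem_inter_iff, Set.mem_Iio]
    constructor
    · rintro (⟨hx, hxn⟩ | rfl)
      · rcases hx with ⟨h1, _⟩ | h1
        · obtain ⟨t, ht, rfl⟩ := (hmemQ _).mp h1
          refine ⟨t, Or.inl ⟨ht, ?_⟩, rfl⟩
          rw [← hqd] at hxn
          exact lt_of_mul_lt_mul_left hxn (Nat.zero_le q)
        · simp only [Set.mem_Ioi] at h1; omega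
      · exact ⟨d, Or.inr rfl, hqd⟩
    · rintro ⟨t, ht | rfl, rfl⟩
      · left
        have hlt : q * t < n := by
          rw [← hqd]
          exact (Nat.mul_lt_mul_left hq0).mpr ht.2
        exact ⟨Or.inl ⟨(hmemQ _).mpr ⟨t, ht.1, rfl⟩, by simp only [Set.mem_singleton_iff]; omega⟩,
          hlt⟩
      · right; exact hqd
  -- every common divisor of Lefts' T' divides q
  have hdiv : ∀ e, (∀ y ∈ Lefts' T', e ∣ y) → e ∣ q := by
    intro e he
    have he' : ∀ a ∈ A, e ∣ q * a := by
      intro a ha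
      apply he
      rw [hL]
      exact ⟨a, ha, rfl⟩
    have heP : ∀ p ∈ Primitives T, e ∣ q * p := by
      intro p hp
      rcases eq_or_lt_of_le (hmax p hp) with rfl | hlt
      · exact he' p (Or.inr rfl)
      · exact he' p (Or.inl ⟨hp.1, hlt⟩)
    have heT : ∀ t ∈ T, e ∣ q * t := by
      have hM : AddSubmonoid.closure (Primitives T) ≤
          { carrier := {t | e ∣ q * t},
            zero_mem' := by simp
            add_mem' := fun {a b} ha hb => by
              simpa [mul_add] using dvd_add ha hb } := by
        exact AddSubmonoid.closure_le.mpr heP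
      intro t ht
      have : t ∈ (AddSubmonoid.closure (Primitives T) : Set ℕ) := by
        rw [NS_closure_primitives hT]; exact ht
      exact hM this
    -- two consecutive elements of T
    set c := sSup (Tᶜ : Set ℕ) + 1 with hc
    have h1 : c ∈ T := NS_large_mem hT (by omega)
    have h2 : c + 1 ∈ T := NS_large_mem hT (by omega)
    have hd1 := heT c h1
    have hd2 := heT (c + 1) h2
    rw [mul_add, mul_one] at hd2
    exact (Nat.dvd_add_right hd1).mp hd2
  -- SetGcd (Lefts' T') = q
  have hgcd : SetGcd (Lefts' T') = q := by
    have qmem : q ∈ {e | ∀ y ∈ Lefts' T', e ∣ y} := by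
      intro y hy
      rw [hL] at hy
      obtain ⟨a, _, rfl⟩ := hy
      exact dvd_mul_right q a
    apply le_antisymm
    · exact csSup_le ⟨q, qmem⟩ (fun e he => Nat.le_of_dvd hq0 (hdiv e he))
    · exact le_csSup ⟨q, fun e he => Nat.le_of_dvd hq0 (hdiv e he)⟩ qmem
  -- Psi T' = GeneratedBy A
  have himg : (fun a => a / SetGcd (Lefts' T')) '' Lefts' T' = A := by
    rw [hgcd, hL, Set.image_image]
    have : ∀ a ∈ A, q * a / q = a := fun a _ => Nat.mul_div_cancel_left a hq0
    calc (fun x => q * x / q) '' A = (fun x => x) '' A := Set.image_congr this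
    _ = A := Set.image_id A
  have hPsi : Psi T' = T := by
    rw [Psi, himg]
    apply le_antisymm
    · intro x hx
      exact (AddSubmonoid.closure_le (S := NSsub T hT)).mpr
        (by
          rintro a (⟨h1, _⟩ | rfl)
          · exact h1
          · exact hdP.1) hx
    · intro x hx
      have hx' : x ∈ (AddSubmonoid.closure (Primitives T) : Set ℕ) := by
        rw [NS_closure_primitives hT]; exact hx
      refine AddSubmonoid.closure_mono ?_ hx'
      intro p hp
      rcases eq_or_lt_of_le (hmax p hp) with rfl | hlt
      · exact Or.inr rfl
      · exact Or.inl ⟨hp.1, hlt⟩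
  exact ⟨part1, part2, hPsi⟩
end
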